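/- Let k ≥ 1 and k_0 ≥ 0 be integers, let n ≥ k + k_0 be an integer, and let a > 0, b > 0 and ρ ≥ b/(b+n) be real numbers. For Q ∈ (0, 1], define B(Q) = a·(ρ(n+b))^{−k/2} · ∫_0^1 λ^{a+k/2−1} · [1 − ((b−1)/(ρ(b+n)))λ]^{(n−k−k_0)/2} · [Q·(1 − bλ/(ρ(b+n))) + λ/(ρ(b+n))]^{−(n−k_0)/2} dλ. Then B(Q) → ∞ as Q → 0⁺ if and only if n ≥ k + k_0 + 2a. -/

import Mathlib

open MeasureTheory Filter Topology Real

set_option maxHeartbeats 1000000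

/-- The Bayes factor of a model with `k` extra regressors against the null
model under the robust prior, as a function of `Q = SSEᵢ/SSE₀`. -/
noncomputable def robustBayesFactor (k k0 n : ℕ) (a b ρ : ℝ) (Q : ℝ) : ℝ :=
  a * (ρ * ((n : ℝ) + b)) ^ (-(k : ℝ) / 2) *
    ∫ l in Set.Ioo (0:ℝ) 1,
      l ^ (a + (k : ℝ) / 2 - 1) *
        (1 - ((b - 1) / (ρ * (b + (n : ℝ)))) * l) ^ (((n : ℝ) - (k : ℝ) - (k0 : ℝ)) / 2) *
        (Q * (1 - b * l / (ρ * (b + (n : ℝ)))) + l / (ρ * (b + (n : ℝ)))) ^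
          (-(((n : ℝ) - (k0 : ℝ)) / 2))

/-- Result 7 of the paper: the robust prior is information consistent
(`B(Q) → ∞` as `Q → 0⁺`) if and only if `n ≥ k + k₀ + 2a`. -/
theorem robust_information_consistency_iff
    (k k0 n : ℕ) (hk : 1 ≤ k) (hn : k + k0 ≤ n)
    (a b ρ : ℝ) (ha : 0 < a) (hb : 0 < b) (hρ : b / (b + (n : ℝ)) ≤ ρ) :
    Tendsto (robustBayesFactor k k0 n a b ρ) (𝓝[Set.Ioc (0:ℝ) 1] 0) atTop ↔
      (k : ℝ) + (k0 : ℝ) + 2 * a ≤ (n : ℝ) := by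
  have hk' : (1:ℝ) ≤ (k:ℝ) := by exact_mod_cast hk
  have hn' : (k:ℝ) + (k0:ℝ) ≤ (n:ℝ) := by exact_mod_cast hn
  have hk0' : (0:ℝ) ≤ (k0:ℝ) := Nat.cast_nonneg k0
  set c₀ : ℝ := ρ * (b + (n:ℝ)) with hc₀def
  have hbn : (0:ℝ) < b + (n:ℝ) := by positivity
  have hρ0 : 0 < ρ := lt_of_lt_of_le (div_pos hb hbn) hρ
  have hc₀ : 0 < c₀ := mul_pos hρ0 hbn
  have hbc₀ : b ≤ c₀ := by
    rw [div_le_iff₀ hbn] at hρ; linarith [hρ]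
  set p : ℝ := a + (k:ℝ)/2 - 1 with hpdef
  set s : ℝ := ((n:ℝ) - (k:ℝ) - (k0:ℝ))/2 with hsdef
  set r : ℝ := ((n:ℝ) - (k0:ℝ))/2 with hrdef
  have hp : -1 < p := by rw [hpdef]; linarith
  have hs : 0 ≤ s := by rw [hsdef]; linarith
  have hr : 0 < r := by rw [hrdef]; linarith
  set F : ℝ → ℝ → ℝ := fun Q l =>
    l ^ p * (1 - (b - 1) / c₀ * l) ^ s * (Q * (1 - b * l / c₀) + l / c₀) ^ (-r)
    with hFdef
  have hBF : ∀ Q : ℝ, robustBayesFactor k k0 n a b ρ Q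
      = a * (ρ * ((n : ℝ) + b)) ^ (-(k : ℝ) / 2) * ∫ l in Set.Ioo (0:ℝ) 1, F Q l := by
    intro Q
    rw [robustBayesFactor, hFdef]
  set C : ℝ := a * (ρ * ((n : ℝ) + b)) ^ (-(k : ℝ) / 2) with hCdef
  have hC : 0 < C := by
    have h1 : (0:ℝ) < ρ * ((n:ℝ) + b) := by positivity
    exact mul_pos ha (rpow_pos_of_pos h1 _)
  -- pointwise facts about the integrand
  have hm₀ : (0:ℝ) < min 1 c₀⁻¹ := lt_min one_pos (by positivity)
  have base2_lb : ∀ l : ℝ, 0 ≤ l → l ≤ 1 → min 1 c₀⁻¹ ≤ 1 - (b - 1) / c₀ * l := by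
    intro l hl0 hl1
    rcases le_total b 1 with h | h
    · have h2 : (b - 1) / c₀ * l ≤ 0 :=
        mul_nonpos_of_nonpos_of_nonneg (div_nonpos_of_nonpos_of_nonneg (by linarith) hc₀.le) hl0
      calc min 1 c₀⁻¹ ≤ 1 := min_le_left _ _
        _ ≤ 1 - (b - 1) / c₀ * l := by linarith
    · have h1 : (b - 1) / c₀ * l ≤ (b - 1) / c₀ :=
        mul_le_of_le_one_right (div_nonneg (by linarith) hc₀.le) hl1
      have h2 : (b - 1) / c₀ ≤ 1 - c₀⁻¹ := by
        rw [div_le_iff₀ hc₀]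
        have : (1 - c₀⁻¹) * c₀ = c₀ - 1 := by field_simp
        rw [this]; linarith
      calc min 1 c₀⁻¹ ≤ c₀⁻¹ := min_le_right _ _
        _ ≤ 1 - (b - 1) / c₀ * l := by linarith
  have base2_pos : ∀ l : ℝ, 0 ≤ l → l ≤ 1 → 0 < 1 - (b - 1) / c₀ * l :=
    fun l hl0 hl1 => lt_of_lt_of_le hm₀ (base2_lb l hl0 hl1)
  have base2_ub : ∀ l : ℝ, 0 ≤ l → l ≤ 1 → 1 - (b - 1) / c₀ * l ≤ 1 + c₀⁻¹ := by
    intro l hl0 hl1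
    rcases le_total b 1 with h | h
    · have h1 : -((b - 1) / c₀ * l) = (1 - b) / c₀ * l := by ring
      have h2 : (1 - b) / c₀ * l ≤ (1 - b) / c₀ :=
        mul_le_of_le_one_right (div_nonneg (by linarith) hc₀.le) hl1
      have h3 : (1 - b) / c₀ ≤ 1 / c₀ :=
        (div_le_div_iff_of_pos_right hc₀).mpr (by linarith)
      have h4 : (1:ℝ) / c₀ = c₀⁻¹ := one_div c₀
      linarith
    · have h2 : 0 ≤ (b - 1) / c₀ * l :=
        mul_nonneg (div_nonneg (by linarith) hc₀.le) hl0
      have : (0:ℝ) ≤ c₀⁻¹ := by positivity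
      linarith
  have hbl : ∀ l : ℝ, 0 ≤ l → l ≤ 1 → 0 ≤ 1 - b * l / c₀ := by
    intro l hl0 hl1
    rw [sub_nonneg, div_le_one hc₀]
    calc b * l ≤ b * 1 := by nlinarith
      _ ≤ c₀ := by linarith
  have base3_lb1 : ∀ Q l : ℝ, 0 ≤ Q → 0 ≤ l → l ≤ 1 →
      l / c₀ ≤ Q * (1 - b * l / c₀) + l / c₀ := by
    intro Q l hQ hl0 hl1
    nlinarith [mul_nonneg hQ (hbl l hl0 hl1)]
  have base3_pos : ∀ Q l : ℝ, 0 ≤ Q → 0 < l → l ≤ 1 →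
      0 < Q * (1 - b * l / c₀) + l / c₀ := by
    intro Q l hQ hl0 hl1
    exact lt_of_lt_of_le (by positivity) (base3_lb1 Q l hQ hl0.le hl1)
  have base3_lb2 : ∀ Q l : ℝ, 0 < Q → 0 ≤ l → l ≤ 1 →
      min Q c₀⁻¹ ≤ Q * (1 - b * l / c₀) + l / c₀ := by
    intro Q l hQ hl0 hl1
    have hbc : b / c₀ ≤ 1 := (div_le_one hc₀).2 hbc₀
    rcases le_total Q c₀⁻¹ with h | h
    · have hQb : Q * b ≤ 1 := by
        calc Q * b ≤ c₀⁻¹ * b := mul_le_mul_of_nonneg_right h hb.le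
          _ = b / c₀ := by rw [inv_mul_eq_div]
          _ ≤ 1 := hbc
      have key : Q * (1 - b * l / c₀) + l / c₀ - Q = l * (1 - Q * b) / c₀ := by
        field_simp; ring
      have h2 : 0 ≤ l * (1 - Q * b) / c₀ :=
        div_nonneg (mul_nonneg hl0 (by linarith)) hc₀.le
      calc min Q c₀⁻¹ ≤ Q := min_le_left _ _
        _ ≤ Q * (1 - b * l / c₀) + l / c₀ := by linarith
    · have h1 : 1 - l ≤ 1 - b * l / c₀ := by
        have : b * l / c₀ = (b / c₀) * l := by ring
        rw [this]
        nlinarith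
      have h2 : c₀⁻¹ * (1 - l) ≤ Q * (1 - b * l / c₀) := by
        calc c₀⁻¹ * (1 - l) ≤ c₀⁻¹ * (1 - b * l / c₀) := by
              apply mul_le_mul_of_nonneg_left h1 (by positivity)
          _ ≤ Q * (1 - b * l / c₀) := mul_le_mul_of_nonneg_right h (hbl l hl0 hl1)
      have key : c₀⁻¹ * (1 - l) + l / c₀ = c₀⁻¹ := by field_simp; ring
      calc min Q c₀⁻¹ ≤ c₀⁻¹ := min_le_right _ _
        _ = c₀⁻¹ * (1 - l) + l / c₀ := key.symm
        _ ≤ Q * (1 - b * l / c₀) + l / c₀ := by linarith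
  have base3_ub : ∀ Q l : ℝ, 0 ≤ Q → 0 ≤ l → l ≤ 1 →
      Q * (1 - b * l / c₀) + l / c₀ ≤ Q + l / c₀ := by
    intro Q l hQ hl0 hl1
    have h1 : Q * (1 - b * l / c₀) ≤ Q * 1 := by
      apply mul_le_mul_of_nonneg_left ?_ hQ
      have : 0 ≤ b * l / c₀ := by positivity
      linarith
    linarith
  have F_nonneg : ∀ Q l : ℝ, 0 ≤ Q → 0 < l → l ≤ 1 → 0 ≤ F Q l := by
    intro Q l hQ hl0 hl1
    rw [hFdef]
    have h2 := base2_pos l hl0.le hl1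
    have h3 := base3_pos Q l hQ hl0 hl1
    positivity
  -- integrability of the integrand over (0,1) for Q > 0
  have F_integrable : ∀ Q : ℝ, 0 < Q → IntegrableOn (F Q) (Set.Ioo (0:ℝ) 1) := by
    intro Q hQ
    have hcont : ContinuousOn (F Q) (Set.Ioo (0:ℝ) 1) := by
      simp only [hFdef]
      apply ContinuousOn.mul
      apply ContinuousOn.mul
      · exact continuousOn_id.rpow_const (fun x hx => Or.inl (ne_of_gt hx.1))
      · apply ContinuousOn.rpow_const
        · fun_prop
        · intro x hx; exact Or.inl (ne_of_gt (base2_pos x hx.1.le hx.2.le))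
      · apply ContinuousOn.rpow_const
        · fun_prop
        · intro x hx; exact Or.inl (ne_of_gt (base3_pos Q x hQ.le hx.1 hx.2.le))
    have hmeas : AEStronglyMeasurable (F Q) (volume.restrict (Set.Ioo (0:ℝ) 1)) :=
      hcont.aestronglyMeasurable measurableSet_Ioo
    have hint : IntegrableOn (fun l : ℝ => ((1 + c₀⁻¹) ^ s * (min Q c₀⁻¹) ^ (-r)) * l ^ p)
        (Set.Ioo (0:ℝ) 1) := by
      have h1 : IntegrableOn (fun l : ℝ => l ^ p) (Set.Ioo (0:ℝ) 1) :=
        ((intervalIntegrable_iff_integrableOn_Ioc_of_le (by norm_num)).mp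
          (intervalIntegral.intervalIntegrable_rpow' hp)).mono_set Set.Ioo_subset_Ioc_self
      exact h1.const_mul _
    apply Integrable.mono' hint hmeas
    rw [ae_restrict_iff' measurableSet_Ioo]
    filter_upwards with l hl
    rw [Real.norm_eq_abs, abs_of_nonneg (F_nonneg Q l hQ.le hl.1 hl.2.le)]
    simp only [hFdef]
    have h2 : (1 - (b - 1) / c₀ * l) ^ s ≤ (1 + c₀⁻¹) ^ s :=
      Real.rpow_le_rpow (base2_pos l hl.1.le hl.2.le).le (base2_ub l hl.1.le hl.2.le) hs
    have h3 : (Q * (1 - b * l / c₀) + l / c₀) ^ (-r) ≤ (min Q c₀⁻¹) ^ (-r) :=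
      Real.rpow_le_rpow_of_nonpos (lt_min hQ (by positivity))
        (base3_lb2 Q l hQ hl.1.le hl.2.le) (by linarith)
    have hl0 : (0:ℝ) ≤ l ^ p := Real.rpow_nonneg hl.1.le p
    calc l ^ p * (1 - (b - 1) / c₀ * l) ^ s * (Q * (1 - b * l / c₀) + l / c₀) ^ (-r)
        ≤ l ^ p * (1 + c₀⁻¹) ^ s * (min Q c₀⁻¹) ^ (-r) := by
          apply mul_le_mul
            (mul_le_mul le_rfl h2 (Real.rpow_nonneg (base2_pos l hl.1.le hl.2.le).le s) hl0) h3
            (Real.rpow_nonneg (base3_pos Q l hQ.le hl.1 hl.2.le).le _)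
            (mul_nonneg hl0 (Real.rpow_nonneg (by positivity) s))
      _ = (1 + c₀⁻¹) ^ s * (min Q c₀⁻¹) ^ (-r) * l ^ p := by ring
  -- the case `n < k + k0 + 2a`: the Bayes factor is bounded
  have hbound : -1 < p - r → ∀ Q ∈ Set.Ioc (0:ℝ) 1, robustBayesFactor k k0 n a b ρ Q ≤
      C * ∫ l in Set.Ioo (0:ℝ) 1, ((1 + c₀⁻¹) ^ s * c₀ ^ r) * l ^ (p - r) := by
    intro hpr Q hQ
    rw [hBF]
    apply mul_le_mul_of_nonneg_left ?_ hC.le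
    apply integral_mono_of_nonneg
    · filter_upwards [ae_restrict_mem measurableSet_Ioo] with l hl
      exact F_nonneg Q l hQ.1.le hl.1 hl.2.le
    · have h1 : IntegrableOn (fun l : ℝ => l ^ (p - r)) (Set.Ioo (0:ℝ) 1) :=
        ((intervalIntegrable_iff_integrableOn_Ioc_of_le (by norm_num)).mp
          (intervalIntegral.intervalIntegrable_rpow' hpr)).mono_set Set.Ioo_subset_Ioc_self
      exact h1.const_mul _
    · filter_upwards [ae_restrict_mem measurableSet_Ioo] with l hl
      simp only [hFdef]
      have hbase3 : (Q * (1 - b * l / c₀) + l / c₀) ^ (-r) ≤ (l / c₀) ^ (-r) :=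
        Real.rpow_le_rpow_of_nonpos (div_pos hl.1 hc₀)
          (base3_lb1 Q l hQ.1.le hl.1.le hl.2.le) (by linarith)
      have hdiv : (l / c₀) ^ (-r) = c₀ ^ r * l ^ (-r) := by
        rw [Real.div_rpow hl.1.le hc₀.le, Real.rpow_neg hc₀.le, div_eq_mul_inv, inv_inv, mul_comm]
      have hbase2 : (1 - (b - 1) / c₀ * l) ^ s ≤ (1 + c₀⁻¹) ^ s :=
        Real.rpow_le_rpow (base2_pos l hl.1.le hl.2.le).le (base2_ub l hl.1.le hl.2.le) hs
      have hl0 : (0:ℝ) ≤ l ^ p := Real.rpow_nonneg hl.1.le p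
      calc l ^ p * (1 - (b - 1) / c₀ * l) ^ s * (Q * (1 - b * l / c₀) + l / c₀) ^ (-r)
          ≤ l ^ p * (1 + c₀⁻¹) ^ s * (l / c₀) ^ (-r) := by
            apply mul_le_mul
              (mul_le_mul le_rfl hbase2 (Real.rpow_nonneg (base2_pos l hl.1.le hl.2.le).le s) hl0)
              hbase3 (Real.rpow_nonneg (base3_pos Q l hQ.1.le hl.1 hl.2.le).le _)
              (mul_nonneg hl0 (Real.rpow_nonneg (by positivity) s))
        _ = (1 + c₀⁻¹) ^ s * c₀ ^ r * (l ^ p * l ^ (-r)) := by rw [hdiv]; ring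
        _ = (1 + c₀⁻¹) ^ s * c₀ ^ r * l ^ (p - r) := by
            rw [← Real.rpow_add hl.1, ← sub_eq_add_neg]
  -- the case `n ≥ k + k0 + 2a`: logarithmic lower bound
  set K : ℝ := (min 1 c₀⁻¹) ^ s * (2 / c₀) ^ (-r) * ((2:ℝ)⁻¹) ^ (p - r + 1) with hKdef
  have hK : 0 < K := by
    rw [hKdef]
    have h1 : (0:ℝ) < 2 / c₀ := by positivity
    positivity
  have hlow : p - r + 1 ≤ 0 → ∀ Q : ℝ, 0 < Q → Q < (2 * c₀)⁻¹ →
      C * (K * (Real.log 2⁻¹ - Real.log (Q * c₀))) ≤ robustBayesFactor k k0 n a b ρ Q := by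
    intro hpr Q hQ hQs
    rw [hBF]
    apply mul_le_mul_of_nonneg_left ?_ hC.le
    set ε : ℝ := Q * c₀ with hεdef
    have hε : 0 < ε := mul_pos hQ hc₀
    have hε2 : ε < 2⁻¹ := by
      have h1 := mul_lt_mul_of_pos_right hQs hc₀
      have h2 : (2 * c₀)⁻¹ * c₀ = 2⁻¹ := by field_simp
      rw [h2] at h1; exact h1
    have hsub : Set.Ioc ε 2⁻¹ ⊆ Set.Ioo (0:ℝ) 1 := fun x hx =>
      ⟨lt_trans hε hx.1, lt_of_le_of_lt hx.2 (by norm_num)⟩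
    have hFsub : IntegrableOn (F Q) (Set.Ioc ε 2⁻¹) := (F_integrable Q hQ).mono_set hsub
    set m1 : ℝ := (min 1 c₀⁻¹) ^ s with hm1def
    set w : ℝ := (2 / c₀) ^ (-r) with hwdef
    set t : ℝ := ((2:ℝ)⁻¹) ^ (p - r + 1) with htdef
    have hm1 : 0 < m1 := Real.rpow_pos_of_pos hm₀ s
    have hw : 0 < w := Real.rpow_pos_of_pos (by positivity) _
    have ht : 0 < t := Real.rpow_pos_of_pos (by norm_num) _
    have hpt : ∀ l ∈ Set.Ioc ε 2⁻¹, K * l⁻¹ ≤ F Q l := by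
      intro l hl
      have hl0 : 0 < l := lt_trans hε hl.1
      have hl1 : l ≤ 1 := le_trans hl.2 (by norm_num)
      have hli : (0:ℝ) < l⁻¹ := by positivity
      have h3 : Q * (1 - b * l / c₀) + l / c₀ ≤ 2 / c₀ * l := by
        have h3a := base3_ub Q l hQ.le hl0.le hl1
        have hQl : Q ≤ l / c₀ := by
          rw [le_div_iff₀ hc₀]
          exact le_of_lt hl.1
        have h5 : l / c₀ + l / c₀ = 2 / c₀ * l := by ring
        linarith
      have h6 : (2 / c₀ * l) ^ (-r) ≤ (Q * (1 - b * l / c₀) + l / c₀) ^ (-r) :=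
        Real.rpow_le_rpow_of_nonpos (base3_pos Q l hQ.le hl0 hl1) h3 (by linarith)
      have h7 : m1 ≤ (1 - (b - 1) / c₀ * l) ^ s :=
        Real.rpow_le_rpow hm₀.le (base2_lb l hl0.le hl1) hs
      have h8 : (2 / c₀ * l) ^ (-r) = w * l ^ (-r) :=
        Real.mul_rpow (by positivity) hl0.le
      have h9 : t ≤ l ^ (p - r + 1) :=
        Real.rpow_le_rpow_of_nonpos hl0 hl.2 hpr
      have e1 : l ^ (p - r + 1) * l⁻¹ = l ^ p * l ^ (-r) := by
        rw [← Real.rpow_neg_one l, ← Real.rpow_add hl0, ← Real.rpow_add hl0]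
        ring_nf
      have hb2 : (0:ℝ) ≤ (1 - (b - 1) / c₀ * l) ^ s :=
        Real.rpow_nonneg (base2_pos l hl0.le hl1).le s
      have hlp : (0:ℝ) ≤ l ^ p := Real.rpow_nonneg hl0.le p
      calc K * l⁻¹ = m1 * w * (t * l⁻¹) := by rw [hKdef]; ring
        _ ≤ m1 * w * (l ^ (p - r + 1) * l⁻¹) := by
            apply mul_le_mul_of_nonneg_left
              (mul_le_mul_of_nonneg_right h9 hli.le) (mul_nonneg hm1.le hw.le)
        _ = m1 * w * (l ^ p * l ^ (-r)) := by rw [e1]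
        _ = l ^ p * m1 * (w * l ^ (-r)) := by ring
        _ = l ^ p * m1 * (2 / c₀ * l) ^ (-r) := by rw [h8]
        _ ≤ l ^ p * (1 - (b - 1) / c₀ * l) ^ s * (2 / c₀ * l) ^ (-r) := by
            apply mul_le_mul_of_nonneg_right
              (mul_le_mul_of_nonneg_left h7 hlp) (Real.rpow_nonneg (by positivity) _)
        _ ≤ l ^ p * (1 - (b - 1) / c₀ * l) ^ s * (Q * (1 - b * l / c₀) + l / c₀) ^ (-r) := by
            apply mul_le_mul_of_nonneg_left h6 (mul_nonneg hlp hb2)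
        _ = F Q l := by simp only [hFdef]
    have hIK : ∫ l in Set.Ioc ε 2⁻¹, K * l⁻¹ = K * (Real.log 2⁻¹ - Real.log ε) := by
      rw [← intervalIntegral.integral_of_le hε2.le, intervalIntegral.integral_const_mul,
        integral_inv_of_pos hε (by norm_num : (0:ℝ) < 2⁻¹),
        Real.log_div (by norm_num) (ne_of_gt hε)]
    have hKint : IntegrableOn (fun l : ℝ => K * l⁻¹) (Set.Ioc ε 2⁻¹) := by
      have hcont2 : ContinuousOn (fun l : ℝ => K * l⁻¹) (Set.Icc ε 2⁻¹) := by
        apply continuousOn_const.mul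
        apply continuousOn_inv₀.mono
        intro x hx
        exact ne_of_gt (lt_of_lt_of_le hε hx.1)
      exact hcont2.integrableOn_Icc.mono_set Set.Ioc_subset_Icc_self
    have h11 : ∫ l in Set.Ioc ε 2⁻¹, K * l⁻¹ ≤ ∫ l in Set.Ioc ε 2⁻¹, F Q l :=
      setIntegral_mono_on hKint hFsub measurableSet_Ioc hpt
    have h12 : ∫ l in Set.Ioc ε 2⁻¹, F Q l ≤ ∫ l in Set.Ioo (0:ℝ) 1, F Q l := by
      apply setIntegral_mono_set (F_integrable Q hQ) ?_ (HasSubset.Subset.eventuallyLE hsub)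
      filter_upwards [ae_restrict_mem measurableSet_Ioo] with l hl
      exact F_nonneg Q l hQ.le hl.1 hl.2.le
    calc K * (Real.log 2⁻¹ - Real.log (Q * c₀)) = ∫ l in Set.Ioc ε 2⁻¹, K * l⁻¹ := by
          rw [hIK, hεdef]
      _ ≤ ∫ l in Set.Ioc ε 2⁻¹, F Q l := h11
      _ ≤ ∫ l in Set.Ioo (0:ℝ) 1, F Q l := h12
  constructor
  · -- tendsto → inequality, by contradiction
    intro htend
    by_contra hcon
    push_neg at hcon
    have hpr : -1 < p - r := by rw [hpdef, hrdef]; linarith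
    set M : ℝ := C * ∫ l in Set.Ioo (0:ℝ) 1, ((1 + c₀⁻¹) ^ s * c₀ ^ r) * l ^ (p - r) with hMdef
    have hev1 : ∀ᶠ Q in 𝓝[Set.Ioc (0:ℝ) 1] 0, M < robustBayesFactor k k0 n a b ρ Q :=
      htend.eventually (eventually_gt_atTop M)
    have hev2 : ∀ᶠ Q in 𝓝[Set.Ioc (0:ℝ) 1] 0, Q ∈ Set.Ioc (0:ℝ) 1 :=
      eventually_mem_nhdsWithin
    have hne : (𝓝[Set.Ioc (0:ℝ) 1] (0:ℝ)).NeBot := by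
      apply mem_closure_iff_nhdsWithin_neBot.mp
      rw [closure_Ioc (by norm_num : (0:ℝ) ≠ 1)]
      exact Set.mem_Icc.mpr ⟨le_refl 0, by norm_num⟩
    obtain ⟨Q, hQ1, hQ2⟩ := (hev1.and hev2).exists
    exact absurd (hbound hpr Q hQ2) (not_le.mpr hQ1)
  · -- inequality → tendsto
    intro hle
    have hpr : p - r + 1 ≤ 0 := by rw [hpdef, hrdef]; linarith
    have hlog : Tendsto (fun Q : ℝ => Real.log (Q * c₀)) (𝓝[Set.Ioc (0:ℝ) 1] 0) atBot := by
      apply Real.tendsto_log_nhdsGT_zero.comp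
      apply tendsto_nhdsWithin_of_tendsto_nhds_of_eventually_within
      · have : Tendsto (fun Q : ℝ => Q * c₀) (𝓝 0) (𝓝 (0 * c₀)) :=
          (continuous_mul_right c₀).tendsto 0
        simpa using this.mono_left nhdsWithin_le_nhds
      · filter_upwards [self_mem_nhdsWithin] with Q hQ
        exact Set.mem_Ioi.mpr (mul_pos hQ.1 hc₀)
    have h2 : Tendsto (fun Q : ℝ => -Real.log (Q * c₀)) (𝓝[Set.Ioc (0:ℝ) 1] 0) atTop :=
      tendsto_neg_atBot_atTop.comp hlog
    have h3 : Tendsto (fun Q : ℝ => Real.log 2⁻¹ + -Real.log (Q * c₀))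
        (𝓝[Set.Ioc (0:ℝ) 1] 0) atTop := tendsto_atTop_add_const_left _ _ h2
    have h4 : Tendsto (fun Q : ℝ => C * (K * (Real.log 2⁻¹ - Real.log (Q * c₀))))
        (𝓝[Set.Ioc (0:ℝ) 1] 0) atTop := by
      have h5 := h3.const_mul_atTop (mul_pos hC hK)
      exact h5.congr (fun Q => by ring)
    apply tendsto_atTop_mono' _ ?_ h4
    have hsmall : ∀ᶠ Q in 𝓝[Set.Ioc (0:ℝ) 1] 0, Q < (2 * c₀)⁻¹ :=
      (gt_mem_nhds (by positivity : (0:ℝ) < (2 * c₀)⁻¹)).filter_mono nhdsWithin_le_nhds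
    filter_upwards [self_mem_nhdsWithin, hsmall] with Q hQ hQs
    exact hlow hpr Q hQ.1 hQs
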